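/- Let x̄(C,ρ) and ȳ(C,ρ) denote the unique maximisers of F(α,β;ρ) with C = α−β. For every fixed C > 0, the maps ρ ↦ x̄(C,ρ) and ρ ↦ ȳ(C,ρ) are real-analytic and strictly decreasing on (0,1). For every fixed ρ ∈ (0,1), the maps C ↦ x̄(C,ρ) and C ↦ ȳ(C,ρ) are real-analytic on (0,∞), with C ↦ x̄(C,ρ) strictly increasing and C ↦ ȳ(C,ρ) strictly decreasing. -/

import Mathlib

/-- The system of equations (in terms of `C = α−β` and `ρ`) characterising the
maximisers `(x̄(C,ρ), ȳ(C,ρ))` of `F(α,β;ρ)`: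
`2 < x`, `2 < y`, `log 2 + ρ log(x−2) + (1−ρ) log(y−2) = 0` and
`C + log(x(y−2)/(y(x−2))) = 0`. -/
def solveSysC (C ρ x y : ℝ) : Prop :=
  2 < x ∧ 2 < y ∧
  Real.log 2 + ρ * Real.log (x - 2) + (1 - ρ) * Real.log (y - 2) = 0 ∧
  C + Real.log (x * (y - 2) / (y * (x - 2))) = 0

open Real Filter Set Topology

set_option linter.unusedSectionVars false
set_option maxHeartbeats 1000000


lemma analyticAt_rlog {x : ℝ} (hx : 0 < x) : AnalyticAt ℝ Real.log x := by
  have h1 : AnalyticAt ℂ Complex.log (x : ℂ) :=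
    analyticAt_clog (by simp [Complex.mem_slitPlane_iff, hx])
  have h2 : AnalyticAt ℝ (fun y : ℝ => (Complex.log (y : ℂ)).re) x :=
    (Complex.reCLM.analyticAt _).comp ((h1.restrictScalars).comp (Complex.ofRealCLM.analyticAt x))
  exact h2.congr (Filter.Eventually.of_forall fun y => (Complex.log_ofReal_re y))

lemma exists_analytic_localInverse {f : ℝ → ℝ} {a c : ℝ} (hf : AnalyticAt ℝ f a)
    (hd : HasDerivAt f c a) (hc : c ≠ 0) :
    ∃ g : ℝ → ℝ, AnalyticAt ℝ g (f a) ∧ Tendsto g (𝓝 (f a)) (𝓝 a) ∧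
      ∀ᶠ y in 𝓝 (f a), f (g y) = y := by
  have hcd : ContDiffAt ℝ 1 f a := hf.contDiffAt
  have hs : HasStrictDerivAt f c a := by
    have := hcd.hasStrictDerivAt one_ne_zero
    rwa [hd.deriv] at this
  have F : HasStrictFDerivAt f
      ((ContinuousLinearEquiv.unitsEquivAut ℝ (Units.mk0 c hc)) : ℝ →L[ℝ] ℝ) a :=
    hs.hasStrictFDerivAt_equiv hc
  obtain ⟨p, hp⟩ := hf
  have h1 : (p 1 fun _ => 1) = c := hp.hasDerivAt.unique hd
  have hp1 : p 1 = (continuousMultilinearCurryFin1 ℝ ℝ ℝ).symm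
      ((ContinuousLinearEquiv.unitsEquivAut ℝ (Units.mk0 c hc)) : ℝ →L[ℝ] ℝ) := by
    apply ContinuousMultilinearMap.ext; intro v
    have hv : v = fun i => (v 0) • (1:ℝ) := by
      funext i
      rw [Fin.eq_zero i]; simp
    rw [hv, (p 1).map_smul_univ]
    simp [h1, ContinuousLinearEquiv.unitsEquivAut_apply, mul_comm]
  have hpH : HasFPowerSeriesAt (F.toOpenPartialHomeomorph f) p a := hp
  have hsymm := (F.toOpenPartialHomeomorph f).hasFPowerSeriesAt_symm
    F.mem_toOpenPartialHomeomorph_source hpH hp1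
  exact ⟨(F.toOpenPartialHomeomorph f).symm, ⟨_, hsymm⟩, F.localInverse_tendsto,
    F.eventually_right_inverse⟩

noncomputable def bfun (t a : ℝ) : ℝ := 2*t*a/(a*(1-t)+2)
noncomputable def psi (t a : ℝ) : ℝ :=
  -(Real.log 2 + Real.log (bfun t a))/(Real.log a - Real.log (bfun t a))
def Sset (t : ℝ) : Set ℝ := {a | 1/2 < a ∧ bfun t a < 1/2}

section rho
variable {t : ℝ} (ht : 0 < t) (ht1 : t < 1)
include ht ht1

lemma den_pos {a : ℝ} (ha : 0 < a) : 0 < a*(1-t)+2 := by nlinarith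

lemma bfun_pos {a : ℝ} (ha : 0 < a) : 0 < bfun t a :=
  div_pos (by positivity) (den_pos ht ht1 ha)

lemma bfun_lt {a : ℝ} (ha : 0 < a) : bfun t a < a := by
  rw [bfun, div_lt_iff₀ (den_pos ht ht1 ha)]
  nlinarith [mul_pos ha ha, sub_pos.2 ht1, mul_pos (sub_pos.2 ht1) (mul_pos ha ha)]

lemma D_pos {a : ℝ} (ha : 0 < a) : 0 < Real.log a - Real.log (bfun t a) := by
  have := Real.log_lt_log (bfun_pos ht ht1 ha) (bfun_lt ht ht1 ha)
  linarith

lemma bfun_strictMonoOn : StrictMonoOn (bfun t) (Set.Ioi 0) := by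
  intro a ha b hb hab
  simp only [Set.mem_Ioi] at ha hb
  rw [bfun, bfun, div_lt_div_iff₀ (den_pos ht ht1 ha) (den_pos ht ht1 hb)]
  nlinarith

lemma bfun_hasDerivAt {a : ℝ} (ha : 0 < a) :
    HasDerivAt (bfun t) (4*t/(a*(1-t)+2)^2) a := by
  have h1 : HasDerivAt (fun a : ℝ => 2*t*a) (2*t) a := by
    simpa using (hasDerivAt_id a).const_mul (2*t)
  have h2 : HasDerivAt (fun a : ℝ => a*(1-t)+2) (1-t) a := by
    simpa using ((hasDerivAt_id a).mul_const (1-t)).add_const 2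
  have := h1.div h2 (den_pos ht ht1 ha).ne'
  exact this.congr_deriv (by ring)

lemma bfun_analyticAt {a : ℝ} (ha : 0 < a) : AnalyticAt ℝ (bfun t) a := by
  apply AnalyticAt.div
  · exact (analyticAt_const.mul analyticAt_id)
  · exact (analyticAt_id.mul analyticAt_const).add analyticAt_const
  · exact (den_pos ht ht1 ha).ne'

lemma Sset_isOpen : IsOpen (Sset t) := by
  rw [isOpen_iff_mem_nhds]
  rintro a ⟨h1, h2⟩
  have ha : (0:ℝ) < a := by linarith
  have hc : ContinuousAt (bfun t) a := (bfun_analyticAt ht ht1 ha).continuousAt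
  have e1 : ∀ᶠ x in 𝓝 a, 1/2 < x := eventually_gt_nhds h1
  have e2 : ∀ᶠ x in 𝓝 a, bfun t x < 1/2 := hc.eventually_lt continuousAt_const h2
  filter_upwards [e1, e2] with x hx1 hx2
  exact ⟨hx1, hx2⟩

lemma Sset_subset {a : ℝ} (ha : a ∈ Sset t) : (0:ℝ) < a := by
  have := ha.1; norm_num at this ⊢; linarith

lemma Sset_convex : Convex ℝ (Sset t) := by
  rw [convex_iff_ordConnected]
  constructor
  intro a1 h1 a2 h2 z hz
  refine ⟨lt_of_lt_of_le h1.1 hz.1, ?_⟩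
  rcases eq_or_lt_of_le hz.2 with h | h
  · rw [h]; exact h2.2
  · have hz0 : (0:ℝ) < z := lt_of_lt_of_le (Sset_subset ht ht1 h1) hz.1
    exact lt_trans (bfun_strictMonoOn ht ht1 (Set.mem_Ioi.2 hz0)
      (Set.mem_Ioi.2 (Sset_subset ht ht1 h2)) h) h2.2

lemma psi_analyticAt {a : ℝ} (ha : a ∈ Sset t) : AnalyticAt ℝ (psi t) a := by
  have ha0 : (0:ℝ) < a := Sset_subset ht ht1 ha
  have hb : AnalyticAt ℝ (fun x => Real.log (bfun t x)) a :=
    (analyticAt_rlog (bfun_pos ht ht1 ha0)).comp (bfun_analyticAt ht ht1 ha0)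
  have hla : AnalyticAt ℝ Real.log a := analyticAt_rlog ha0
  exact AnalyticAt.div ((analyticAt_const.add hb).neg) (hla.sub hb)
    (D_pos ht ht1 ha0).ne'

lemma logb_hasDerivAt {a : ℝ} (ha : 0 < a) :
    HasDerivAt (fun x => Real.log (bfun t x)) (4*t/(a*(1-t)+2)^2 / bfun t a) a :=
  (bfun_hasDerivAt ht ht1 ha).log (bfun_pos ht ht1 ha).ne'

lemma psi_hasDerivAt {a : ℝ} (ha : 0 < a) :
    HasDerivAt (psi t)
      (((-(4*t/(a*(1-t)+2)^2 / bfun t a)) * (Real.log a - Real.log (bfun t a)) -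
        (-(Real.log 2 + Real.log (bfun t a))) * (1/a - 4*t/(a*(1-t)+2)^2 / bfun t a)) /
        (Real.log a - Real.log (bfun t a))^2) a := by
  have hN : HasDerivAt (fun x => -(Real.log 2 + Real.log (bfun t x)))
      (-(4*t/(a*(1-t)+2)^2 / bfun t a)) a := by
    exact (((hasDerivAt_const a (Real.log 2)).add (logb_hasDerivAt ht ht1 ha)).neg).congr_deriv (by ring)
  have hD : HasDerivAt (fun x => Real.log x - Real.log (bfun t x))
      (1/a - 4*t/(a*(1-t)+2)^2 / bfun t a) a := by
    have := (Real.hasDerivAt_log ha.ne').sub (logb_hasDerivAt ht ht1 ha)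
    exact this.congr_deriv (by ring)
  exact hN.div hD (D_pos ht ht1 ha).ne'

lemma psi_deriv_neg {a : ℝ} (ha : a ∈ Sset t) : deriv (psi t) a < 0 := by
  have ha0 : (0:ℝ) < a := Sset_subset ht ht1 ha
  rw [(psi_hasDerivAt ht ht1 ha0).deriv]
  have hden : 0 < a*(1-t)+2 := den_pos ht ht1 ha0
  have hb : 0 < bfun t a := bfun_pos ht ht1 ha0
  have hD : 0 < Real.log a - Real.log (bfun t a) := D_pos ht ht1 ha0
  have hbb : 0 < 4*t/(a*(1-t)+2)^2 / bfun t a := by positivity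
  -- N > 0 : log 2 + log b < 0
  have hN : 0 < -(Real.log 2 + Real.log (bfun t a)) := by
    have h2b : (2:ℝ) * bfun t a < 1 := by linarith [ha.2]
    have : Real.log (2 * bfun t a) < 0 := Real.log_neg (by positivity) h2b
    rw [Real.log_mul (by norm_num) hb.ne'] at this
    linarith
  -- D' > 0 : 1/a - b'/b > 0
  have hD' : 0 < 1/a - 4*t/(a*(1-t)+2)^2 / bfun t a := by
    have hbv : 4*t/(a*(1-t)+2)^2 / bfun t a = 2/(a*(a*(1-t)+2)) := by
      rw [bfun]
      field_simp
      ring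
    rw [hbv]
    rw [sub_pos, div_lt_div_iff₀ (by positivity) ha0]
    nlinarith [mul_pos (mul_pos ha0 ha0) (sub_pos.2 ht1)]
  apply div_neg_of_neg_of_pos
  · nlinarith
  · positivity

lemma psi_strictAntiOn : StrictAntiOn (psi t) (Sset t) := by
  apply strictAntiOn_of_deriv_neg (Sset_convex ht ht1)
  · exact fun x hx => (psi_analyticAt ht ht1 hx).continuousAt.continuousWithinAt
  · intro x hx
    rw [(Sset_isOpen ht ht1).interior_eq] at hx
    exact psi_deriv_neg ht ht1 hx

end rho

lemma solve_props {C ρ x y t : ℝ} (htdef : t = Real.exp (-C)) (hC : 0 < C)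
    (h0 : 0 < ρ) (h1 : ρ < 1) (h : solveSysC C ρ x y) :
    (0 < t ∧ t < 1) ∧ x - 2 ∈ Sset t ∧ psi t (x-2) = ρ ∧ y = bfun t (x-2) + 2 := by
  obtain ⟨hx, hy, e1, e2⟩ := h
  have ht : 0 < t := htdef ▸ Real.exp_pos _
  have ht1 : t < 1 := htdef ▸ Real.exp_lt_one_iff.mpr (by linarith)
  have ha : (0:ℝ) < x - 2 := by linarith
  have hb0 : (0:ℝ) < y - 2 := by linarith
  have hx0 : (0:ℝ) < x := by linarith
  have hy0 : (0:ℝ) < y := by linarith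
  -- step 1 : y - 2 = bfun t (x-2)
  have hQ : 0 < x*(y-2)/(y*(x-2)) := by positivity
  have hQt : x*(y-2)/(y*(x-2)) = t := by
    have hlog : Real.log (x*(y-2)/(y*(x-2))) = -C := by linarith
    rw [htdef, ← hlog, Real.exp_log hQ]
  have hmul : x*(y-2) = t*(y*(x-2)) := by
    field_simp at hQt
    linarith [hQt]
  have hbeq : y - 2 = bfun t (x-2) := by
    rw [bfun]
    rw [eq_div_iff (den_pos ht ht1 ha).ne']
    nlinarith
  -- step 2 : psi t (x-2) = ρ
  have hD : 0 < Real.log (x-2) - Real.log (bfun t (x-2)) := D_pos ht ht1 ha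
  have e1' : Real.log 2 + ρ * Real.log (x-2) + (1-ρ) * Real.log (bfun t (x-2)) = 0 := by
    rw [← hbeq]; exact e1
  have hpsi : psi t (x-2) = ρ := by
    rw [psi, div_eq_iff hD.ne']
    ring_nf
    ring_nf at e1'
    linarith
  -- step 3 : x - 2 ∈ Sset t
  have hmem : x - 2 ∈ Sset t := by
    constructor
    · -- 1/2 < x - 2  from ρ < 1
      have hND : -(Real.log 2 + Real.log (bfun t (x-2))) < Real.log (x-2) - Real.log (bfun t (x-2)) := by
        have := hpsi
        rw [psi] at this
        rw [div_eq_iff hD.ne'] at this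
        nlinarith
      have hlog : Real.log (1/2) < Real.log (x-2) := by
        rw [Real.log_div (by norm_num) (by norm_num), Real.log_one]
        linarith
      have := (Real.log_lt_log_iff (by norm_num) ha).mp hlog
      linarith
    · -- bfun < 1/2 from 0 < ρ
      have hN : 0 < -(Real.log 2 + Real.log (bfun t (x-2))) := by
        have := hpsi
        rw [psi, div_eq_iff hD.ne'] at this
        nlinarith
      have hb : 0 < bfun t (x-2) := bfun_pos ht ht1 ha
      have : Real.log (2 * bfun t (x-2)) < 0 := by
        rw [Real.log_mul (by norm_num) hb.ne']
        linarith
      have := (Real.log_neg_iff (by positivity)).mp this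
      linarith
  exact ⟨⟨ht, ht1⟩, hmem, hpsi, by linarith [hbeq]⟩


noncomputable def bh (ρ a : ℝ) : ℝ := Real.exp ((-(Real.log 2) - ρ*Real.log a)/(1-ρ))
noncomputable def chi (ρ a : ℝ) : ℝ :=
  Real.log (bh ρ a + 2) + Real.log a - Real.log (a+2) - Real.log (bh ρ a)


section Cdir
variable {ρ : ℝ} (h0 : 0 < ρ) (h1 : ρ < 1)
include h0 h1

lemma bh_pos (a : ℝ) : 0 < bh ρ a := Real.exp_pos _

lemma bh_analyticAt {a : ℝ} (ha : 0 < a) : AnalyticAt ℝ (bh ρ) a := by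
  apply analyticAt_rexp.comp
  exact ((analyticAt_const.sub (analyticAt_const.mul (analyticAt_rlog ha))).div
    analyticAt_const (by intro h; exact absurd (sub_eq_zero.mp h).symm (by linarith)))

lemma bh_hasDerivAt {a : ℝ} (ha : 0 < a) :
    HasDerivAt (bh ρ) (bh ρ a * ((-ρ/a)/(1-ρ))) a := by
  have hu : HasDerivAt (fun x : ℝ => (-(Real.log 2) - ρ*Real.log x)/(1-ρ))
      ((-ρ/a)/(1-ρ)) a := by
    have := ((hasDerivAt_const a (-(Real.log 2))).sub
      ((Real.hasDerivAt_log ha.ne').const_mul ρ)).div_const (1-ρ)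
    simpa [div_eq_mul_inv, mul_comm] using this
  exact hu.exp

lemma bh_strictAntiOn : StrictAntiOn (bh ρ) (Set.Ioi 0) := by
  intro a ha b hb hab
  simp only [Set.mem_Ioi] at ha hb
  apply Real.exp_lt_exp.mpr
  rw [div_lt_div_iff_of_pos_right (by linarith : (0:ℝ) < 1 - ρ)]
  nlinarith [mul_lt_mul_of_pos_left (Real.log_lt_log ha hab) h0]

lemma chi_analyticAt {a : ℝ} (ha : 0 < a) : AnalyticAt ℝ (chi ρ) a := by
  have h2 : AnalyticAt ℝ (fun x => Real.log (bh ρ x + 2)) a :=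
    (analyticAt_rlog (by linarith [bh_pos h0 h1 a])).comp
      ((bh_analyticAt h0 h1 ha).add analyticAt_const)
  have h3 : AnalyticAt ℝ (fun x => Real.log (x+2)) a :=
    (analyticAt_rlog (by linarith)).comp (analyticAt_id.add analyticAt_const)
  have h4 : AnalyticAt ℝ (fun x => Real.log (bh ρ x)) a :=
    (analyticAt_rlog (bh_pos h0 h1 a)).comp (bh_analyticAt h0 h1 ha)
  exact ((h2.add (analyticAt_rlog ha)).sub h3).sub h4

lemma chi_hasDerivAt {a : ℝ} (ha : 0 < a) :
    HasDerivAt (chi ρ)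
      (bh ρ a * ((-ρ/a)/(1-ρ)) / (bh ρ a + 2) + 1/a - 1/(a+2)
        - bh ρ a * ((-ρ/a)/(1-ρ)) / bh ρ a) a := by
  have hb2 : (0:ℝ) < bh ρ a + 2 := by linarith [bh_pos h0 h1 a]
  have g1 : HasDerivAt (fun x => Real.log (bh ρ x + 2))
      (bh ρ a * ((-ρ/a)/(1-ρ)) / (bh ρ a + 2)) a :=
    (((bh_hasDerivAt h0 h1 ha).add_const 2).log hb2.ne')
  have g2 : HasDerivAt Real.log (1/a) a := by
    simpa [one_div] using Real.hasDerivAt_log ha.ne'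
  have g3 : HasDerivAt (fun x : ℝ => Real.log (x+2)) (1/(a+2)) a := by
    have := (((hasDerivAt_id a).add_const 2).log (by linarith : a+2 ≠ 0))
    simpa [one_div] using this
  have g4 : HasDerivAt (fun x => Real.log (bh ρ x))
      (bh ρ a * ((-ρ/a)/(1-ρ)) / bh ρ a) a :=
    ((bh_hasDerivAt h0 h1 ha).log (bh_pos h0 h1 a).ne')
  exact ((g1.add g2).sub g3).sub g4

lemma chi_deriv_pos {a : ℝ} (ha : 0 < a) : 0 < deriv (chi ρ) a := by
  rw [(chi_hasDerivAt h0 h1 ha).deriv]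
  have hb : 0 < bh ρ a := bh_pos h0 h1 a
  have hb2 : (0:ℝ) < bh ρ a + 2 := by linarith
  have h1ρ : (0:ℝ) < 1 - ρ := by linarith
  set B := bh ρ a with hB
  have key : B * ((-ρ/a)/(1-ρ)) / (B + 2) - B * ((-ρ/a)/(1-ρ)) / B
      = (ρ/a/(1-ρ)) * (2/(B+2)) := by
    field_simp
    ring
  have expand : B * ((-ρ/a)/(1-ρ)) / (B + 2) + 1/a - 1/(a+2) - B * ((-ρ/a)/(1-ρ)) / B
      = (ρ/a/(1-ρ)) * (2/(B+2)) + (1/a - 1/(a+2)) := by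
    rw [← key]; ring
  rw [expand]
  have p1 : 0 < (ρ/a/(1-ρ)) * (2/(B+2)) := by positivity
  have p2 : 0 < 1/a - 1/(a+2) := by
    rw [sub_pos, div_lt_div_iff₀ (by linarith) ha]
    linarith
  linarith

lemma chi_strictMonoOn : StrictMonoOn (chi ρ) (Set.Ioi 0) := by
  apply strictMonoOn_of_deriv_pos (convex_Ioi 0)
  · exact fun x hx => (chi_analyticAt h0 h1 hx).continuousAt.continuousWithinAt
  · intro x hx
    rw [interior_Ioi] at hx
    exact chi_deriv_pos h0 h1 hx

end Cdir

lemma solve_props2 {C ρ x y : ℝ} (hC : 0 < C) (h0 : 0 < ρ) (h1 : ρ < 1)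
    (h : solveSysC C ρ x y) :
    2 < x ∧ y = bh ρ (x-2) + 2 ∧ chi ρ (x-2) = C := by
  obtain ⟨hx, hy, e1, e2⟩ := h
  have ha : (0:ℝ) < x - 2 := by linarith
  have hb0 : (0:ℝ) < y - 2 := by linarith
  have hx0 : (0:ℝ) < x := by linarith
  have hy0 : (0:ℝ) < y := by linarith
  have h1ρ : (0:ℝ) < 1 - ρ := by linarith
  have hlogb : Real.log (y-2) = (-(Real.log 2) - ρ*Real.log (x-2))/(1-ρ) := by
    rw [eq_div_iff h1ρ.ne']
    linarith [e1]
  have hbeq : y - 2 = bh ρ (x-2) := by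
    rw [bh, ← hlogb, Real.exp_log hb0]
  have hlogQ : Real.log (x*(y-2)/(y*(x-2))) = -C := by linarith
  have hexpand : Real.log (x*(y-2)/(y*(x-2)))
      = Real.log x + Real.log (y-2) - (Real.log y + Real.log (x-2)) := by
    rw [Real.log_div (by positivity) (by positivity), Real.log_mul hx0.ne' hb0.ne',
      Real.log_mul hy0.ne' ha.ne']
  have hchi : chi ρ (x-2) = C := by
    rw [chi, ← hbeq]
    have hxe : x - 2 + 2 = x := by ring
    have hye : y - 2 + 2 = y := by ring
    rw [hxe, hye]
    rw [hexpand] at hlogQ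
    linarith
  exact ⟨hx, by linarith [hbeq], hchi⟩

/-- Let `X C ρ = x̄(C,ρ)` and `Y C ρ = ȳ(C,ρ)` be the unique maximisers of
`F(α,β;ρ)` with `C = α−β`, i.e. the solutions of the characterising system.
For fixed `C > 0`, `ρ ↦ x̄(C,ρ)` and `ρ ↦ ȳ(C,ρ)` are real-analytic and
strictly decreasing on `(0,1)`; for fixed `ρ ∈ (0,1)`, `C ↦ x̄(C,ρ)` and
`C ↦ ȳ(C,ρ)` are real-analytic on `(0,∞)`, the former strictly increasing and
the latter strictly decreasing. -/

theorem stmt16 (X Y : ℝ → ℝ → ℝ)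
    (hXY : ∀ C ρ : ℝ, 0 < C → 0 < ρ → ρ < 1 → solveSysC C ρ (X C ρ) (Y C ρ)) :
    (∀ C : ℝ, 0 < C →
      AnalyticOnNhd ℝ (X C) (Set.Ioo 0 1) ∧ AnalyticOnNhd ℝ (Y C) (Set.Ioo 0 1) ∧
      StrictAntiOn (X C) (Set.Ioo 0 1) ∧ StrictAntiOn (Y C) (Set.Ioo 0 1)) ∧
    (∀ ρ : ℝ, 0 < ρ → ρ < 1 →
      AnalyticOnNhd ℝ (fun C => X C ρ) (Set.Ioi 0) ∧
      AnalyticOnNhd ℝ (fun C => Y C ρ) (Set.Ioi 0) ∧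
      StrictMonoOn (fun C => X C ρ) (Set.Ioi 0) ∧
      StrictAntiOn (fun C => Y C ρ) (Set.Ioi 0)) := by
  constructor
  · -- fixed C
    intro C hC
    set t := Real.exp (-C) with htdef
    have ht : 0 < t := Real.exp_pos _
    have ht1 : t < 1 := Real.exp_lt_one_iff.mpr (by linarith)
    have props : ∀ ρ ∈ Set.Ioo (0:ℝ) 1,
        (X C ρ - 2 ∈ Sset t) ∧ psi t (X C ρ - 2) = ρ ∧ Y C ρ = bfun t (X C ρ - 2) + 2 :=
      fun ρ hρ => ((solve_props htdef hC hρ.1 hρ.2 (hXY C ρ hC hρ.1 hρ.2)).2)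
    have hXan : AnalyticOnNhd ℝ (X C) (Set.Ioo 0 1) := by
      intro ρ0 hρ0
      obtain ⟨hmem, hpsi, -⟩ := props ρ0 hρ0
      set a0 := X C ρ0 - 2 with ha0def
      have ha0 : 0 < a0 := Sset_subset ht ht1 hmem
      have hd := psi_hasDerivAt ht ht1 ha0
      have hd_neg : deriv (psi t) a0 < 0 := psi_deriv_neg ht ht1 hmem
      have hd' : HasDerivAt (psi t) (deriv (psi t) a0) a0 := hd.differentiableAt.hasDerivAt
      obtain ⟨g, hg_an, hg_t, hg_inv⟩ :=
        exists_analytic_localInverse (psi_analyticAt ht ht1 hmem) hd' hd_neg.ne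
      rw [hpsi] at hg_an hg_t hg_inv
      have heq : (fun ρ => g ρ + 2) =ᶠ[𝓝 ρ0] X C := by
        have ev1 : ∀ᶠ ρ in 𝓝 ρ0, ρ ∈ Set.Ioo (0:ℝ) 1 := isOpen_Ioo.eventually_mem hρ0
        have ev2 : ∀ᶠ ρ in 𝓝 ρ0, g ρ ∈ Sset t :=
          hg_t.eventually ((Sset_isOpen ht ht1).eventually_mem hmem)
        filter_upwards [ev1, ev2, hg_inv] with ρ hρ hgS hginv
        obtain ⟨hmem', hpsi', -⟩ := props ρ hρ
        have : g ρ = X C ρ - 2 :=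
          (psi_strictAntiOn ht ht1).injOn hgS hmem' (hginv.trans hpsi'.symm)
        simp only [this]
        ring
      exact (hg_an.add analyticAt_const).congr heq
    have hXanti : StrictAntiOn (X C) (Set.Ioo 0 1) := by
      intro ρ1 h1 ρ2 h2 hlt
      obtain ⟨hm1, hp1, -⟩ := props ρ1 h1
      obtain ⟨hm2, hp2, -⟩ := props ρ2 h2
      by_contra hcon
      push_neg at hcon
      have hle : X C ρ1 - 2 ≤ X C ρ2 - 2 := by linarith
      rcases eq_or_lt_of_le hle with h | h
      · rw [← hp1, ← hp2, h] at hlt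
        exact lt_irrefl _ hlt
      · have := psi_strictAntiOn ht ht1 hm1 hm2 h
        rw [hp1, hp2] at this
        linarith
    refine ⟨hXan, ?_, hXanti, ?_⟩
    · intro ρ0 hρ0
      obtain ⟨hmem, -, -⟩ := props ρ0 hρ0
      have ha0 : 0 < X C ρ0 - 2 := Sset_subset ht ht1 hmem
      have hinner : AnalyticAt ℝ (fun ρ => X C ρ - 2) ρ0 :=
        (hXan ρ0 hρ0).sub analyticAt_const
      have hcomp0 : AnalyticAt ℝ ((bfun t) ∘ (fun ρ => X C ρ - 2)) ρ0 :=
        AnalyticAt.comp (f := fun ρ => X C ρ - 2) (x := ρ0) (bfun_analyticAt ht ht1 ha0) hinner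
      have hcomp : AnalyticAt ℝ (fun ρ => bfun t (X C ρ - 2) + 2) ρ0 :=
        hcomp0.add analyticAt_const
      apply hcomp.congr
      filter_upwards [isOpen_Ioo.eventually_mem hρ0] with ρ hρ
      exact (props ρ hρ).2.2.symm
    · intro ρ1 h1 ρ2 h2 hlt
      have hx21 : X C ρ2 < X C ρ1 := hXanti h1 h2 hlt
      obtain ⟨hm1, -, hy1⟩ := props ρ1 h1
      obtain ⟨hm2, -, hy2⟩ := props ρ2 h2
      have := bfun_strictMonoOn ht ht1
        (Set.mem_Ioi.2 (Sset_subset ht ht1 hm2)) (Set.mem_Ioi.2 (Sset_subset ht ht1 hm1))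
        (by linarith)
      rw [hy1, hy2]
      linarith
  · -- fixed ρ
    intro ρ h0 h1
    have props : ∀ C ∈ Set.Ioi (0:ℝ),
        2 < X C ρ ∧ Y C ρ = bh ρ (X C ρ - 2) + 2 ∧ chi ρ (X C ρ - 2) = C :=
      fun C hC => solve_props2 hC h0 h1 (hXY C ρ hC h0 h1)
    have hXan : AnalyticOnNhd ℝ (fun C => X C ρ) (Set.Ioi 0) := by
      intro C0 hC0
      obtain ⟨hx2, -, hchi⟩ := props C0 hC0
      set a0 := X C0 ρ - 2 with ha0def
      have ha0 : 0 < a0 := by simp only [ha0def]; linarith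
      have hd := chi_hasDerivAt h0 h1 ha0
      have hd_pos : 0 < deriv (chi ρ) a0 := chi_deriv_pos h0 h1 ha0
      have hd' : HasDerivAt (chi ρ) (deriv (chi ρ) a0) a0 := hd.differentiableAt.hasDerivAt
      obtain ⟨g, hg_an, hg_t, hg_inv⟩ :=
        exists_analytic_localInverse (chi_analyticAt h0 h1 ha0) hd' hd_pos.ne'
      rw [hchi] at hg_an hg_t hg_inv
      have heq : (fun C => g C + 2) =ᶠ[𝓝 C0] (fun C => X C ρ) := by
        have ev1 : ∀ᶠ C in 𝓝 C0, C ∈ Set.Ioi (0:ℝ) := isOpen_Ioi.eventually_mem hC0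
        have ev2 : ∀ᶠ C in 𝓝 C0, g C ∈ Set.Ioi (0:ℝ) :=
          hg_t.eventually (isOpen_Ioi.eventually_mem ha0)
        filter_upwards [ev1, ev2, hg_inv] with c hc hgS hginv
        obtain ⟨hx2', -, hchi'⟩ := props c hc
        have hmem' : X c ρ - 2 ∈ Set.Ioi (0:ℝ) := by simp; linarith
        have : g c = X c ρ - 2 :=
          (chi_strictMonoOn h0 h1).injOn hgS hmem' (hginv.trans hchi'.symm)
        simp only [this]
        ring
      exact (hg_an.add analyticAt_const).congr heq
    have hXmono : StrictMonoOn (fun C => X C ρ) (Set.Ioi 0) := by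
      intro C1 hC1 C2 hC2 hlt
      obtain ⟨hx1, -, hchi1⟩ := props C1 hC1
      obtain ⟨hx2, -, hchi2⟩ := props C2 hC2
      by_contra hcon
      push_neg at hcon
      have hcon' : X C2 ρ ≤ X C1 ρ := hcon
      have hle : X C2 ρ - 2 ≤ X C1 ρ - 2 := by linarith
      rcases eq_or_lt_of_le hle with h | h
      · rw [← hchi1, ← hchi2, h] at hlt
        exact lt_irrefl _ hlt
      · have := chi_strictMonoOn h0 h1
          (Set.mem_Ioi.2 (by linarith : (0:ℝ) < X C2 ρ - 2))
          (Set.mem_Ioi.2 (by linarith : (0:ℝ) < X C1 ρ - 2)) h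
        rw [hchi1, hchi2] at this
        linarith
    refine ⟨hXan, ?_, hXmono, ?_⟩
    · intro C0 hC0
      obtain ⟨hx2, -, -⟩ := props C0 hC0
      have ha0 : 0 < X C0 ρ - 2 := by linarith
      have hinner : AnalyticAt ℝ (fun C => X C ρ - 2) C0 :=
        (hXan C0 hC0).sub analyticAt_const
      have hcomp0 : AnalyticAt ℝ ((bh ρ) ∘ (fun C => X C ρ - 2)) C0 :=
        AnalyticAt.comp (f := fun C => X C ρ - 2) (x := C0) (bh_analyticAt h0 h1 ha0) hinner
      have hcomp : AnalyticAt ℝ (fun C => bh ρ (X C ρ - 2) + 2) C0 :=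
        hcomp0.add analyticAt_const
      apply hcomp.congr
      filter_upwards [isOpen_Ioi.eventually_mem hC0] with c hc
      exact (props c hc).2.1.symm
    · intro C1 hC1 C2 hC2 hlt
      have hx12 : X C1 ρ < X C2 ρ := hXmono hC1 hC2 hlt
      obtain ⟨hxa, hy1, -⟩ := props C1 hC1
      obtain ⟨hxb, hy2, -⟩ := props C2 hC2
      have := bh_strictAntiOn h0 h1
        (Set.mem_Ioi.2 (by linarith : (0:ℝ) < X C1 ρ - 2))
        (Set.mem_Ioi.2 (by linarith : (0:ℝ) < X C2 ρ - 2))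
        (by linarith)
      show Y C2 ρ < Y C1 ρ
      rw [hy1, hy2]
      linarith
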